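/- Let K be an algebraically closed field complete with respect to a valuation v extending the p-adic valuation (v(p)=1), and let p be a prime. Let c_3, c_1, c_0 ∈ K with v(c_3) = 1, v(c_1) = p/(p+1), v(c_0) = 1. Then every root y of the polynomial y^{p+1} + c_3·y^p + c_1·y + c_0 satisfies v(y) = 1/(p+1). -/

import Mathlib

open scoped NNReal

/-- Newton polygon computation (f = 1 case): over an algebraically closed complete valued
field `K` with valuation normalized by `v(p) = 1` (multiplicatively, `|p| = p⁻¹`), if
`v(c₃) = 1`, `v(c₁) = p/(p+1)` and `v(c₀) = 1` (multiplicatively `|c₃| = |c₀| = p⁻¹`,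
`|c₁| = p^{-p/(p+1)}`), then every root `y` of `y^{p+1} + c₃ y^p + c₁ y + c₀` satisfies
`v(y) = 1/(p+1)`, i.e. `|y| = p^{-1/(p+1)}`. -/
theorem root_valuation_critical_f_one
    {p : ℕ} (hp : p.Prime)
    (K : Type*) [Field K] [Valued K ℝ≥0] [CompleteSpace K] [IsAlgClosed K]
    (hvp : Valued.v (p : K) = ((p : ℝ≥0))⁻¹)
    (c3 c1 c0 : K)
    (h3 : Valued.v c3 = (p : ℝ≥0) ^ (-1 : ℝ))
    (h1 : Valued.v c1 = (p : ℝ≥0) ^ (-((p : ℝ) / ((p : ℝ) + 1))))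
    (h0 : Valued.v c0 = (p : ℝ≥0) ^ (-1 : ℝ))
    (y : K) (hy : y ^ (p + 1) + c3 * y ^ p + c1 * y + c0 = 0) :
    Valued.v y = (p : ℝ≥0) ^ (-(1 / ((p : ℝ) + 1))) := by
  have hp0 : p ≠ 0 := hp.pos.ne'
  have hq1 : (1:ℝ≥0) < (p:ℝ≥0) := by exact_mod_cast hp.one_lt
  have hq0 : (p:ℝ≥0) ≠ 0 := by positivity
  have he0 : ((p:ℝ) + 1) ≠ 0 := by positivity
  set q : ℝ≥0 := (p : ℝ≥0) with hq
  set e : ℝ := (p:ℝ) + 1 with heq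
  set t : ℝ≥0 := q ^ (-(1/e)) with ht
  set w : ℝ≥0 := Valued.v y with hw
  have hA : t ^ (p+1) = q ^ (-1:ℝ) := by
    rw [ht, ← NNReal.rpow_natCast (q ^ (-(1/e))) (p+1), ← NNReal.rpow_mul]
    congr 1
    rw [heq]; push_cast; field_simp
  have hB : t ^ p = q ^ (-((p:ℝ)/e)) := by
    rw [ht, ← NNReal.rpow_natCast (q ^ (-(1/e))) p, ← NNReal.rpow_mul]
    congr 1
    ring
  have ht1 : t < 1 := by
    rw [ht]
    have : -(1/e) < 0 := by
      have : (0:ℝ) < 1/e := by rw [heq]; positivity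
      linarith
    calc q ^ (-(1/e)) < q ^ (0:ℝ) := by
          exact NNReal.rpow_lt_rpow_of_exponent_lt hq1 this
      _ = 1 := NNReal.rpow_zero q
  have ht0 : 0 < t := NNReal.rpow_pos (lt_trans one_pos hq1)
  have hqt : q ^ (-1:ℝ) < t := by
    rw [ht]
    apply NNReal.rpow_lt_rpow_of_exponent_lt hq1
    rw [heq]
    have hp1 : (1:ℝ) ≤ (p:ℝ) := by exact_mod_cast hp.one_lt.le
    rw [neg_lt_neg_iff, div_lt_one (by positivity)]
    linarith
  -- valuation of terms
  have v0 : Valued.v (y ^ (p+1)) = w ^ (p+1) := by rw [map_pow, hw]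
  have v3 : Valued.v (c3 * y ^ p) = q ^ (-1:ℝ) * w ^ p := by
    rw [map_mul, map_pow, h3, hw]
  have v1 : Valued.v (c1 * y) = q ^ (-((p:ℝ)/e)) * w := by
    rw [map_mul, h1, hw, heq]
  rcases lt_trichotomy w t with hlt | heqt | hgt
  · -- w < t : c0 dominates, contradiction
    exfalso
    have hc0 : c0 = -(y ^ (p+1) + c3 * y ^ p + c1 * y) := by linear_combination hy
    have hw1 : w < 1 := lt_trans hlt ht1
    have b0 : w ^ (p+1) < q ^ (-1:ℝ) := by
      rw [← hA]; exact pow_lt_pow_left₀ hlt zero_le (Nat.succ_ne_zero p)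
    have b3 : q ^ (-1:ℝ) * w ^ p < q ^ (-1:ℝ) := by
      apply mul_lt_of_lt_one_right (NNReal.rpow_pos (lt_trans one_pos hq1))
      exact pow_lt_one₀ zero_le hw1 hp0
    have b1 : q ^ (-((p:ℝ)/e)) * w < q ^ (-1:ℝ) := by
      calc q ^ (-((p:ℝ)/e)) * w < q ^ (-((p:ℝ)/e)) * t := by
            exact mul_lt_mul_of_pos_left hlt (NNReal.rpow_pos (lt_trans one_pos hq1))
        _ = q ^ (-1:ℝ) := by
            rw [ht, ← NNReal.rpow_add hq0]
            congr 1
            rw [heq]; field_simp; ring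
    have : Valued.v c0 < q ^ (-1:ℝ) := by
      rw [hc0, Valuation.map_neg]
      calc Valued.v (y ^ (p+1) + c3 * y ^ p + c1 * y)
          ≤ max (max (Valued.v (y ^ (p+1))) (Valued.v (c3 * y ^ p))) (Valued.v (c1 * y)) :=
            le_trans (Valuation.map_add _ _ _)
              (max_le_max (Valuation.map_add _ _ _) le_rfl)
        _ < q ^ (-1:ℝ) := by
            rw [v0, v3, v1]
            exact max_lt (max_lt b0 b3) b1
    rw [h0] at this
    exact lt_irrefl _ this
  · exact heqt
  · -- w > t : y^{p+1} dominates, contradiction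
    exfalso
    have hyp : y ^ (p+1) = -(c3 * y ^ p + c1 * y + c0) := by linear_combination hy
    have hw0 : 0 < w := lt_trans ht0 hgt
    have b3 : q ^ (-1:ℝ) * w ^ p < w ^ (p+1) := by
      rw [pow_succ']
      exact mul_lt_mul_of_pos_right (lt_trans hqt hgt) (pow_pos hw0 p)
    have b1 : q ^ (-((p:ℝ)/e)) * w < w ^ (p+1) := by
      rw [pow_succ, ← hB]
      exact mul_lt_mul_of_pos_right (pow_lt_pow_left₀ hgt zero_le hp0) hw0
    have b0 : q ^ (-1:ℝ) < w ^ (p+1) := by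
      rw [← hA]; exact pow_lt_pow_left₀ hgt zero_le (Nat.succ_ne_zero p)
    have : Valued.v (y ^ (p+1)) < w ^ (p+1) := by
      rw [hyp, Valuation.map_neg]
      calc Valued.v (c3 * y ^ p + c1 * y + c0)
          ≤ max (max (Valued.v (c3 * y ^ p)) (Valued.v (c1 * y))) (Valued.v c0) :=
            le_trans (Valuation.map_add _ _ _)
              (max_le_max (Valuation.map_add _ _ _) le_rfl)
        _ < w ^ (p+1) := by
            rw [v3, v1, h0]
            exact max_lt (max_lt b3 b1) b0
    rw [v0] at this
    exact lt_irrefl _ this
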